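/- arXiv:1807.11044 — 4 statements merged into one kernel-verified Lean document; each statement's English description precedes it below -/
import Mathlib

section
/- Let R be a commutative local ring and E a finite free R-module equipped with a symplectic form ⟨·,·⟩ : E × E → R (an alternating bilinear form such that e ↦ ⟨·, e⟩ is a bijection E → Hom_R(E,R)). Let F be a direct summand of E which is isotropic, i.e. F ⊆ F^⊥ where F^⊥ := {e ∈ E : ⟨f, e⟩ = 0 for all f ∈ F}. Then 2·rank(F) ≤ rank(E), and F = F^⊥ if and only if 2·rank(F) = rank(E). -/
open Module LinearMap

/-- The orthogonal `F^⊥` of a submodule `F` with respect to a bilinear form `B` on `E`. -/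
def Bilin.perp {R E : Type*} [CommRing R] [AddCommGroup E] [Module R E]
    (B : E →ₗ[R] E →ₗ[R] R) (F : Submodule R E) :
    Submodule R E where
  carrier := {e | ∀ f ∈ F, B f e = 0}
  add_mem' := by
    intro a b ha hb f hf
    simp [map_add, ha f hf, hb f hf]
  zero_mem' := by
    intro f hf
    simp
  smul_mem' := by
    intro c x hx f hf
    simp [map_smul, hx f hf]


/-- Over a local ring, a finite projective module is free. -/
private lemma free_of_proj {R P : Type*} [CommRing R] [IsLocalRing R]
    [AddCommGroup P] [Module R P] [Module.Finite R P] [Module.Projective R P] :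
    Module.Free R P := by
  have : Module.FinitePresentation R P := Module.finitePresentation_of_projective R P
  exact Module.free_of_flat_of_isLocalRing

/-- Split surjection rank-nullity over a local ring. -/
private lemma aux_split {R M N : Type*} [CommRing R] [IsLocalRing R]
    [AddCommGroup M] [Module R M] [Module.Finite R M] [Module.Free R M]
    [AddCommGroup N] [Module R N] [Module.Finite R N] [Module.Free R N]
    (g : M →ₗ[R] N) (hs : Function.Surjective g) :
    Module.Finite R (LinearMap.ker g) ∧ Module.Free R (LinearMap.ker g) ∧
      Module.finrank R M = Module.finrank R (LinearMap.ker g) + Module.finrank R N := by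
  obtain ⟨s, hsec⟩ := Module.projective_lifting_property g LinearMap.id hs
  have hgs : ∀ n : N, g (s n) = n := fun n => by simpa using LinearMap.congr_fun hsec n
  have hmem : ∀ x : M, x - s (g x) ∈ LinearMap.ker g := by
    intro x; simp [LinearMap.mem_ker, hgs]
  let f : M →ₗ[R] LinearMap.ker g :=
    (LinearMap.id - s ∘ₗ g).codRestrict _ hmem
  have hf : ∀ x : LinearMap.ker g, f x = x := by
    intro x
    ext
    simp only [f, LinearMap.codRestrict_apply, LinearMap.sub_apply, LinearMap.id_apply,
      LinearMap.comp_apply]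
    rw [LinearMap.mem_ker.mp x.2, map_zero, sub_zero]
  have hcompl : IsCompl (LinearMap.ker g) (LinearMap.ker f) := LinearMap.isCompl_of_proj hf
  -- instances
  have hπ : Function.Surjective (Submodule.linearProjOfIsCompl _ _ hcompl) := by
    intro y; exact ⟨y, Submodule.linearProjOfIsCompl_apply_left hcompl y⟩
  have hπ' : Function.Surjective (Submodule.linearProjOfIsCompl _ _ hcompl.symm) := by
    intro y; exact ⟨y, Submodule.linearProjOfIsCompl_apply_left hcompl.symm y⟩
  have finK : Module.Finite R (LinearMap.ker g) := Module.Finite.of_surjective _ hπ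
  have finK' : Module.Finite R (LinearMap.ker f) := Module.Finite.of_surjective _ hπ'
  have projK : Module.Projective R (LinearMap.ker g) :=
    Module.Projective.of_split (LinearMap.ker g).subtype
      (Submodule.linearProjOfIsCompl _ _ hcompl)
      (by ext x; simp; exact Submodule.linearProjOfIsCompl_apply_left hcompl x)
  have freeK : Module.Free R (LinearMap.ker g) := free_of_proj
  have projK' : Module.Projective R (LinearMap.ker f) :=
    Module.Projective.of_split (LinearMap.ker f).subtype
      (Submodule.linearProjOfIsCompl _ _ hcompl.symm)
      (by ext x; simp; exact Submodule.linearProjOfIsCompl_apply_left hcompl.symm x)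
  have freeK' : Module.Free R (LinearMap.ker f) := free_of_proj
  refine ⟨finK, freeK, ?_⟩
  -- ker f ≃ N via g
  have hbij : Function.Bijective (g ∘ₗ (LinearMap.ker f).subtype) := by
    constructor
    · intro x y hxy
      have key : ∀ z : LinearMap.ker f, (z : M) = s (g (z : M)) := by
        intro z
        have h0 : (z : M) - s (g (z : M)) = 0 :=
          congrArg Subtype.val (LinearMap.mem_ker.mp z.2)
        exact (sub_eq_zero.mp h0)
      have hxy' : g (x : M) = g (y : M) := hxy
      ext
      rw [key x, key y, hxy']
    · intro n
      refine ⟨⟨s n, ?_⟩, by simp [hgs]⟩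
      ext
      simp [f, hgs]
  have e : (LinearMap.ker f) ≃ₗ[R] N := LinearEquiv.ofBijective _ hbij
  have e2 : (LinearMap.ker g × LinearMap.ker f) ≃ₗ[R] M :=
    Submodule.prodEquivOfIsCompl _ _ hcompl
  calc Module.finrank R M = Module.finrank R (LinearMap.ker g × LinearMap.ker f) :=
        e2.symm.finrank_eq
    _ = Module.finrank R (LinearMap.ker g) + Module.finrank R (LinearMap.ker f) :=
        Module.finrank_prod
    _ = Module.finrank R (LinearMap.ker g) + Module.finrank R N := by rw [e.finrank_eq]

/-- membership in perp -/
private lemma mem_perp_iff {R E : Type*} [CommRing R] [AddCommGroup E] [Module R E]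
    (B : E →ₗ[R] E →ₗ[R] R) (F : Submodule R E) (e : E) :
    e ∈ Bilin.perp B F ↔ ∀ f ∈ F, B f e = 0 := Iff.rfl

private lemma subsingleton_of_finrank_zero {R P : Type*} [CommRing R] [Nontrivial R]
    [StrongRankCondition R] [AddCommGroup P] [Module R P] [Module.Finite R P]
    [Module.Free R P] (h : Module.finrank R P = 0) : Subsingleton P := by
  rw [Module.finrank_eq_card_chooseBasisIndex] at h
  haveI : IsEmpty (Module.Free.ChooseBasisIndex R P) := Fintype.card_eq_zero_iff.mp h
  exact (Module.Free.chooseBasis R P).repr.toEquiv.subsingleton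

theorem statement1' {R E : Type*} [CommRing R] [IsLocalRing R]
    [AddCommGroup E] [Module R E] [Module.Finite R E] [Module.Free R E]
    (B : E →ₗ[R] E →ₗ[R] R)
    (halt : ∀ e : E, B e e = 0)
    (hperf : Function.Bijective ⇑B.flip)
    (F : Submodule R E) (hF : ∃ G : Submodule R E, IsCompl F G)
    (hiso : F ≤ Bilin.perp B F) :
    2 * Module.finrank R F ≤ Module.finrank R E ∧
    (F = Bilin.perp B F ↔ 2 * Module.finrank R F = Module.finrank R E) := by
  classical
  obtain ⟨G, hG⟩ := hF
  set π := F.linearProjOfIsCompl G hG with hπdef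
  have hπleft : ∀ x : F, π x = x := fun x => Submodule.linearProjOfIsCompl_apply_left hG x
  have hπsurj : Function.Surjective π := fun y => ⟨y, hπleft y⟩
  haveI finF : Module.Finite R F := Module.Finite.of_surjective π hπsurj
  haveI projF : Module.Projective R F :=
    Module.Projective.of_split F.subtype π (by ext x; simp [hπdef]; exact Submodule.linearProjOfIsCompl_apply_left hG x)
  haveI freeF : Module.Free R F := free_of_proj
  -- the map g : E → Dual F
  set g : E →ₗ[R] Module.Dual R F := F.subtype.dualMap ∘ₗ B.flip with hgdef
  have hgsurj : Function.Surjective g := by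
    intro ψ
    obtain ⟨e, he⟩ := hperf.2 (ψ ∘ₗ π)
    refine ⟨e, ?_⟩
    ext f
    have : B.flip e = ψ ∘ₗ π := he
    simp only [hgdef, LinearMap.comp_apply, LinearMap.dualMap_apply, this]
    exact congrArg ψ (hπleft f)
  have hker : LinearMap.ker g = Bilin.perp B F := by
    ext e
    simp only [LinearMap.mem_ker, mem_perp_iff]
    constructor
    · intro h f hf
      have := LinearMap.congr_fun h ⟨f, hf⟩
      simpa [hgdef] using this
    · intro h
      ext f
      simpa [hgdef] using h f f.2
  -- finrank of Dual F = finrank F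
  have hdual : Module.finrank R (Module.Dual R F) = Module.finrank R F := by
    let b := Module.Free.chooseBasis R F
    rw [Module.finrank_eq_card_basis b.dualBasis, Module.finrank_eq_card_basis b]
  obtain ⟨finP, freeP, hrk1⟩ := aux_split g hgsurj
  rw [hker] at finP freeP
  rw [hker, hdual] at hrk1
  haveI := finP; haveI := freeP
  -- second projection: perp → F
  set φ : (Bilin.perp B F) →ₗ[R] F := π ∘ₗ (Bilin.perp B F).subtype with hφdef
  have hφsurj : Function.Surjective φ := by
    intro y
    exact ⟨⟨(y : E), hiso y.2⟩, hπleft y⟩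
  obtain ⟨finQ, freeQ, hrk2⟩ := aux_split φ hφsurj
  haveI := finQ; haveI := freeQ
  constructor
  · omega
  constructor
  · intro h
    rw [← h] at hrk1
    omega
  · intro h
    have hker0 : Module.finrank R (LinearMap.ker φ) = 0 := by omega
    haveI : Subsingleton (LinearMap.ker φ) := subsingleton_of_finrank_zero hker0
    refine le_antisymm hiso ?_
    intro x hx
    have hmem : x - (π x : E) ∈ Bilin.perp B F := by
      exact sub_mem hx (hiso (π x).2)
    have hz : φ ⟨x - (π x : E), hmem⟩ = 0 := by
      have : π (x - (π x : E)) = 0 := by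
        rw [map_sub, hπleft (π x), sub_self]
      simpa [hφdef] using this
    have : (⟨⟨x - (π x : E), hmem⟩, hz⟩ : LinearMap.ker φ) = 0 := Subsingleton.elim _ _
    have hx0 : x - (π x : E) = 0 := by
      simpa using congrArg (fun z : LinearMap.ker φ => ((z : Bilin.perp B F) : E)) this
    have : x = (π x : E) := by rwa [sub_eq_zero] at hx0
    rw [this]
    exact (π x).2

/-- over a local ring, an isotropic direct summand `F` of a finite free
symplectic module `E` satisfies `2 rank F ≤ rank E`, with equality iff `F` is Lagrangian. -/
theorem statement1 {R E : Type*} [CommRing R] [IsLocalRing R]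
    [AddCommGroup E] [Module R E] [Module.Finite R E] [Module.Free R E]
    (B : E →ₗ[R] E →ₗ[R] R)
    (halt : ∀ e : E, B e e = 0)
    (hperf : Function.Bijective ⇑B.flip)
    (F : Submodule R E) (hF : ∃ G : Submodule R E, IsCompl F G)
    (hiso : F ≤ Bilin.perp B F) :
    2 * Module.finrank R F ≤ Module.finrank R E ∧
    (F = Bilin.perp B F ↔ 2 * Module.finrank R F = Module.finrank R E) :=
  statement1' B halt hperf F hF hiso
end

section
/- Let R be a commutative local ring and E a finite free R-module equipped with a perfect alternating R-bilinear form ⟨·,·⟩ : E × E → R (i.e. ⟨e,e⟩ = 0 for all e and the map E → Hom_R(E,R), e ↦ ⟨·,e⟩, is bijective). Then there exists a Lagrangian direct summand of E, that is, a direct summand F of E with F = F^⊥ := {e ∈ E : ⟨f,e⟩ = 0 for all f ∈ F}. -/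
lemma Bilin.mem_perp {R E : Type*} [CommRing R] [AddCommGroup E] [Module R E]
    {B : E →ₗ[R] E →ₗ[R] R} {F : Submodule R E} {x : E} :
    x ∈ Bilin.perp B F ↔ ∀ f ∈ F, B f x = 0 := Iff.rfl

lemma bilin_skew {R E : Type*} [CommRing R] [AddCommGroup E] [Module R E]
    (B : E →ₗ[R] E →ₗ[R] R) (halt : ∀ e : E, B e e = 0) (x y : E) :
    B x y = -B y x := by
  have h := halt (x + y)
  simp only [map_add, LinearMap.add_apply, halt x, halt y] at h
  linear_combination h

universe u

lemma key {R : Type*} [CommRing R] [IsLocalRing R] (n : ℕ) :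
    ∀ {E : Type u} [AddCommGroup E] [Module R E] [Module.Finite R E] [Module.Free R E]
      (B : E →ₗ[R] E →ₗ[R] R), (∀ e : E, B e e = 0) → Function.Bijective ⇑B.flip →
      Module.finrank R E = n →
      ∃ F : Submodule R E, (∃ G : Submodule R E, IsCompl F G) ∧ F = Bilin.perp B F := by
  induction n using Nat.strong_induction_on with
  | _ n ih =>
  intro E _ _ _ _ B halt hperf hn
  by_cases hE : Subsingleton E
  · refine ⟨⊥, ⟨⊤, isCompl_bot_top⟩, le_antisymm bot_le ?_⟩
    intro x _
    rw [Subsingleton.elim x 0]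
    exact Submodule.zero_mem ⊥
  · have hnt : Nontrivial E := not_subsingleton_iff_nontrivial.mp hE
    obtain ⟨i⟩ : Nonempty (Module.Free.ChooseBasisIndex R E) := by
      by_contra h
      rw [not_nonempty_iff] at h
      exact hE ((Module.Free.chooseBasis R E).repr.toEquiv.subsingleton)
    set b := Module.Free.chooseBasis R E with hb
    set e : E := b i with he
    obtain ⟨f, hf⟩ := hperf.2 (b.coord i)
    have hBf : ∀ x : E, B x f = b.coord i x := fun x => by rw [← LinearMap.flip_apply (f := B), hf]
    have hef : B e f = 1 := by rw [hBf e]; simp [he]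
    have skew := bilin_skew B halt
    have hfe : B f e = -1 := by rw [skew f e, hef]
    set H : Submodule R E := Submodule.span R {e, f} with hH
    have heH : e ∈ H := Submodule.subset_span (by simp)
    have hfH : f ∈ H := Submodule.subset_span (by simp)
    set W : Submodule R E := Bilin.perp B H with hW
    have memW : ∀ x : E, x ∈ W ↔ B e x = 0 ∧ B f x = 0 := by
      intro x
      constructor
      · intro hx; exact ⟨hx e heH, hx f hfH⟩
      · rintro ⟨h1, h2⟩ g hg
        obtain ⟨a, c, rfl⟩ := Submodule.mem_span_pair.mp hg
        simp [map_add, map_smul, h1, h2]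
    have decomp : ∀ x : E, (x + B f x • e - B e x • f) ∈ W := by
      intro x
      rw [memW]
      constructor <;>
      · simp only [map_add, map_sub, map_smul, smul_eq_mul, halt e, halt f, hef, hfe]
        ring
    have hcompl : IsCompl H W := by
      constructor
      · rw [Submodule.disjoint_def]
        intro x hxH hxW
        obtain ⟨a, c, rfl⟩ := Submodule.mem_span_pair.mp hxH
        rw [memW] at hxW
        obtain ⟨h1, h2⟩ := hxW
        simp only [map_add, map_smul, smul_eq_mul, halt e, halt f, hef, hfe, mul_zero, mul_one,
          zero_add, add_zero, mul_neg, neg_eq_zero] at h1 h2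
        rw [h1, h2, zero_smul, zero_smul, add_zero]
      · rw [codisjoint_iff_le_sup]
        intro x _
        have h1 : (x + B f x • e - B e x • f) ∈ H ⊔ W := Submodule.mem_sup_right (decomp x)
        have h2 : B f x • e ∈ H ⊔ W :=
          Submodule.mem_sup_left (Submodule.smul_mem _ _ heH)
        have h3 : B e x • f ∈ H ⊔ W :=
          Submodule.mem_sup_left (Submodule.smul_mem _ _ hfH)
        have hx : x = (x + B f x • e - B e x • f) - B f x • e + B e x • f := by abel
        rw [hx]
        exact add_mem (sub_mem h1 h2) h3
    set proj : E →ₗ[R] W := W.linearProjOfIsCompl H hcompl.symm with hproj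
    have hprojW : ∀ w : W, proj (w : E) = w := fun w =>
      Submodule.linearProjOfIsCompl_apply_left hcompl.symm w
    haveI : Module.Finite R W :=
      Module.Finite.of_surjective proj (fun w => ⟨(w : E), hprojW w⟩)
    haveI : Module.Projective R W :=
      Module.Projective.of_split W.subtype proj (by ext w; simp [hprojW])
    haveI : Module.FinitePresentation R W := Module.finitePresentation_of_projective R W
    haveI : Module.Free R W := Module.free_of_flat_of_isLocalRing
    -- rank of H
    have hli : LinearIndependent R ![e, f] := by
      rw [LinearIndependent.pair_iff]
      intro s t hst
      have h1 : B e (s • e + t • f) = 0 := by rw [hst]; simp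
      have h2 : B f (s • e + t • f) = 0 := by rw [hst]; simp
      simp only [map_add, map_smul, smul_eq_mul, halt e, halt f, hef, hfe, mul_zero, mul_one,
        zero_add, add_zero, mul_neg, neg_eq_zero] at h1 h2
      exact ⟨h2, h1⟩
    have hrange : Set.range ![e, f] = {e, f} := by
      ext x
      simp [Fin.exists_fin_two]
      tauto
    have hHr : H = Submodule.span R (Set.range ![e, f]) := by rw [hrange]
    haveI : Module.Free R H := by
      rw [hHr]; exact Module.Free.of_basis (Module.Basis.span hli)
    haveI : Module.Finite R H :=
      Module.Finite.span_of_finite R (Set.toFinite _)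
    have hfinH : Module.finrank R H = 2 := by
      rw [hHr]
      simpa using Module.finrank_eq_card_basis (Module.Basis.span hli)
    have hrankE : Module.finrank R H + Module.finrank R W = n := by
      rw [← hn, ← Module.finrank_prod]
      exact (Submodule.prodEquivOfIsCompl H W hcompl).finrank_eq
    have hWlt : Module.finrank R W < n := by omega
    -- restricted form
    set B' : W →ₗ[R] W →ₗ[R] R := B.compl₁₂ W.subtype W.subtype with hB'
    have hB'app : ∀ x y : W, B' x y = B (x : E) (y : E) := fun x y => rfl
    have halt' : ∀ w : W, B' w w = 0 := fun w => halt (w : E)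
    have hsup : H ⊔ W = ⊤ := hcompl.sup_eq_top
    have hperf' : Function.Bijective ⇑B'.flip := by
      constructor
      · rw [injective_iff_map_eq_zero]
        intro w hw
        have hEw : B.flip (w : E) = 0 := by
          ext x
          obtain ⟨h, hh, w', hw', rfl⟩ :=
            Submodule.mem_sup.mp (show x ∈ H ⊔ W from hsup ▸ Submodule.mem_top)
          have hA : B h (w : E) = 0 := w.2 h hh
          have hBz : B w' (w : E) = 0 := by
            have := congrFun (congrArg DFunLike.coe hw) (⟨w', hw'⟩ : W)
            simpa [hB'app] using this
          simp [hA, hBz]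
        have h0 : (w : E) = 0 := hperf.1 (by rw [hEw, map_zero])
        exact Subtype.coe_injective (by simpa using h0)
      · intro ψ
        obtain ⟨y, hy⟩ := hperf.2 (ψ ∘ₗ proj)
        obtain ⟨h, hh, w', hw', rfl⟩ :=
          Submodule.mem_sup.mp (show y ∈ H ⊔ W from hsup ▸ Submodule.mem_top)
        refine ⟨⟨w', hw'⟩, ?_⟩
        ext x
        have h1 : B (x : E) (h + w') = ψ (proj (x : E)) := by
          rw [← LinearMap.flip_apply, hy]; rfl
        have h2 : B (x : E) h = 0 := by
          rw [skew, x.2 h hh, neg_zero]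
        have h3 : proj (x : E) = x := hprojW x
        simp only [map_add, h2, zero_add, h3] at h1
        simpa [hB'app] using h1
    obtain ⟨L, ⟨L', hLL'⟩, hL⟩ := ih _ hWlt B' halt' hperf' rfl
    set F : Submodule R E := Submodule.span R {e} ⊔ L.map W.subtype with hF
    set G : Submodule R E := Submodule.span R {f} ⊔ L'.map W.subtype with hG
    have memF : ∀ x : E, x ∈ F ↔ ∃ a : R, ∃ l ∈ L.map W.subtype, x = a • e + l := by
      intro x
      rw [hF, Submodule.mem_sup]
      constructor
      · rintro ⟨y, hy, l, hl, rfl⟩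
        obtain ⟨a, rfl⟩ := Submodule.mem_span_singleton.mp hy
        exact ⟨a, l, hl, rfl⟩
      · rintro ⟨a, l, hl, rfl⟩
        exact ⟨a • e, Submodule.smul_mem _ _ (Submodule.mem_span_singleton_self e), l, hl, rfl⟩
    have memG : ∀ x : E, x ∈ G ↔ ∃ c : R, ∃ l ∈ L'.map W.subtype, x = c • f + l := by
      intro x
      rw [hG, Submodule.mem_sup]
      constructor
      · rintro ⟨y, hy, l, hl, rfl⟩
        obtain ⟨c, rfl⟩ := Submodule.mem_span_singleton.mp hy
        exact ⟨c, l, hl, rfl⟩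
      · rintro ⟨c, l, hl, rfl⟩
        exact ⟨c • f, Submodule.smul_mem _ _ (Submodule.mem_span_singleton_self f), l, hl, rfl⟩
    have hLW : L.map W.subtype ≤ W := Submodule.map_subtype_le W L
    have hL'W : L'.map W.subtype ≤ W := Submodule.map_subtype_le W L'
    have hLL : ∀ x ∈ L.map W.subtype, ∀ y ∈ L.map W.subtype, B x y = 0 := by
      rintro _ ⟨lx, hlx, rfl⟩ _ ⟨ly, hly, rfl⟩
      have hly' : ly ∈ Bilin.perp B' L := hL ▸ hly
      exact hly' lx hlx
    refine ⟨F, ⟨G, ?_, ?_⟩, ?_⟩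
    · -- Disjoint F G
      rw [Submodule.disjoint_def]
      intro x hxF hxG
      obtain ⟨a, l, hl, rfl⟩ := (memF x).mp hxF
      obtain ⟨c, l', hl', hx2⟩ := (memG _).mp hxG
      have heq : a • e - c • f = l' - l := by
        have := hx2
        linear_combination (norm := abel) this
      have hHm : a • e - c • f ∈ H := sub_mem (Submodule.smul_mem _ _ heH)
        (Submodule.smul_mem _ _ hfH)
      have hWm : a • e - c • f ∈ W := heq ▸ sub_mem (hL'W hl') (hLW hl)
      have h0 : a • e - c • f = 0 := hcompl.disjoint.le_bot ⟨hHm, hWm⟩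
      have ha : a = 0 := by
        have := congrArg (B f) h0
        simp only [map_sub, map_smul, smul_eq_mul, hfe, halt f, mul_neg, mul_one, mul_zero,
          sub_zero, map_zero, neg_eq_zero] at this
        exact this
      have hc : c = 0 := by
        have := congrArg (B e) h0
        simp only [map_sub, map_smul, smul_eq_mul, hef, halt e, mul_zero, mul_one,
          zero_sub, map_zero, neg_eq_zero] at this
        exact this
      have hll' : l = l' := by
        have : l' - l = 0 := by rw [← heq, ha, hc, zero_smul, zero_smul, sub_zero]
        linear_combination (norm := abel) -this
      obtain ⟨lx, hlx, rfl⟩ := hl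
      obtain ⟨ly, hly, hlye⟩ := hl'
      have : lx = ly := Subtype.coe_injective (hll'.trans hlye.symm)
      have hlx0 : lx = 0 := by
        have : lx ∈ L ⊓ L' := ⟨hlx, this ▸ hly⟩
        simpa using hLL'.disjoint.le_bot this
      rw [ha, zero_smul, zero_add, hlx0]
      simp
    · -- Codisjoint F G
      rw [codisjoint_iff_le_sup]
      intro x _
      set xw : W := ⟨x + B f x • e - B e x • f, decomp x⟩ with hxw
      obtain ⟨l, hl, l', hl', hsum⟩ :=
        Submodule.mem_sup.mp (show xw ∈ L ⊔ L' from hLL'.sup_eq_top ▸ Submodule.mem_top)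
      have hsumE : (l : E) + (l' : E) = x + B f x • e - B e x • f := by
        have := congrArg (Subtype.val) hsum
        simpa using this
      have hxeq : x = ((-(B f x)) • e + (l : E)) + ((B e x) • f + (l' : E)) := by
        rw [neg_smul]
        linear_combination (norm := abel) -hsumE
      rw [hxeq]
      refine add_mem (Submodule.mem_sup_left ?_) (Submodule.mem_sup_right ?_)
      · rw [memF]
        exact ⟨-(B f x), l, ⟨l, hl, rfl⟩, rfl⟩
      · rw [memG]
        exact ⟨B e x, l', ⟨l', hl', rfl⟩, rfl⟩
    · -- Lagrangian
      apply le_antisymm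
      · intro x hx
        obtain ⟨a, l, hl, rfl⟩ := (memF x).mp hx
        intro g hg
        obtain ⟨c, m, hm, rfl⟩ := (memF g).mp hg
        have h1 : B e l = 0 := ((memW l).mp (hLW hl)).1
        have h2 : B m e = 0 := by
          rw [skew]
          rw [show B e m = 0 from ((memW m).mp (hLW hm)).1]
          simp
        have h3 : B m l = 0 := hLL m hm l hl
        simp only [map_add, map_smul, LinearMap.add_apply, LinearMap.smul_apply,
          smul_eq_mul, halt e, h1, h2, h3, mul_zero, zero_add, add_zero, zero_mul]

      · intro x hx
        have heF : e ∈ F := (memF e).mpr ⟨1, 0, Submodule.zero_mem _, by simp⟩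
        have hex : B e x = 0 := hx e heF
        have hx'W : (x + B f x • e - B e x • f) ∈ W := decomp x
        have hx'L : (⟨x + B f x • e - B e x • f, hx'W⟩ : W) ∈ L := by
          rw [hL]
          intro m hm
          have hmF : (m : E) ∈ F := (memF _).mpr ⟨0, m, ⟨m, hm, rfl⟩, by simp⟩
          have hmx : B (m : E) x = 0 := hx _ hmF
          have hme : B (m : E) e = 0 := by
            rw [skew]
            rw [show B e (m : E) = 0 from ((memW _).mp m.2).1]
            simp
          rw [hB'app]
          simp only [map_add, map_sub, map_smul, smul_eq_mul, hmx, hme, hex, mul_zero,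
            zero_add, add_zero, zero_mul, sub_zero]
        rw [memF]
        refine ⟨-(B f x), x + B f x • e - B e x • f, ⟨_, hx'L, rfl⟩, ?_⟩
        rw [hex, zero_smul, sub_zero, neg_smul]
        abel

/-- a finite free module `E` over a local ring equipped with a perfect
alternating bilinear form admits a Lagrangian direct summand. -/
theorem statement2 {R E : Type*} [CommRing R] [IsLocalRing R]
    [AddCommGroup E] [Module R E] [Module.Finite R E] [Module.Free R E]
    (B : E →ₗ[R] E →ₗ[R] R)
    (halt : ∀ e : E, B e e = 0)
    (hperf : Function.Bijective ⇑B.flip) :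
    ∃ F : Submodule R E, (∃ G : Submodule R E, IsCompl F G) ∧ F = Bilin.perp B F := by
  exact key (Module.finrank R E) B halt hperf rfl
end

section
/- Let R be a commutative ring and E a finitely generated projective R-module equipped with a symplectic form ⟨·,·⟩ (an alternating bilinear form such that e ↦ ⟨·,e⟩ is a bijection E → Hom_R(E,R)). Let E₀ be a Lagrangian direct summand of E (i.e. E₀ = E₀^⊥) and let (e₁, …, eₙ) be a basis of E₀ as an R-module. Then there exist elements f₁, …, fₙ ∈ E such that (e₁, …, eₙ, f₁, …, fₙ) is a basis of E and is symplectic, i.e. ⟨eᵢ, eⱼ⟩ = ⟨fᵢ, fⱼ⟩ = 0 and ⟨eᵢ, fⱼ⟩ = δᵢⱼ for all 1 ≤ i, j ≤ n. -/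
/-- any basis of a Lagrangian direct summand `E₀` of a symplectic
finitely generated projective module `E` can be completed to a symplectic basis of `E`. -/
theorem statement3 {R E : Type*} [CommRing R]
    [AddCommGroup E] [Module R E] [Module.Finite R E] [Module.Projective R E]
    (B : E →ₗ[R] E →ₗ[R] R)
    (halt : ∀ e : E, B e e = 0)
    (hperf : Function.Bijective ⇑B.flip)
    (E₀ : Submodule R E) (hcompl : ∃ G : Submodule R E, IsCompl E₀ G)
    (hlag : E₀ = Bilin.perp B E₀)
    {n : ℕ} (b : Module.Basis (Fin n) R E₀) :
    ∃ f : Fin n → E, ∃ c : Module.Basis (Fin n ⊕ Fin n) R E,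
      (∀ i, c (Sum.inl i) = (b i : E)) ∧ (∀ i, c (Sum.inr i) = f i) ∧
      (∀ i j, B (b i : E) (b j : E) = 0) ∧
      (∀ i j, B (f i) (f j) = 0) ∧
      (∀ i j, B (b i : E) (f j) = if i = j then 1 else 0) := by
  classical
  obtain ⟨G, hG⟩ := hcompl
  -- skew-symmetry
  have skew : ∀ x y : E, B x y = - B y x := by
    intro x y
    have h := halt (x + y)
    simp only [map_add, LinearMap.add_apply, halt] at h
    linear_combination h
  -- elements of E₀ pair to zero
  have hE₀0 : ∀ e x : E, e ∈ E₀ → x ∈ E₀ → B e x = 0 := by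
    intro e x he hx
    have : x ∈ Bilin.perp B E₀ := hlag ▸ hx
    exact this e he
  have hb0 : ∀ i j, B (b i : E) (b j : E) = 0 := fun i j =>
    hE₀0 _ _ (b i).2 (b j).2
  -- lift dual basis functionals along B.flip
  set π := E₀.projectionOnto G hG with hπ
  choose g hg using fun j => hperf.2 ((b.coord j).comp π)
  have hgx : ∀ x j, B x (g j) = b.coord j (π x) := by
    intro x j
    calc B x (g j) = B.flip (g j) x := rfl
      _ = ((b.coord j).comp π) x := by rw [hg j]
      _ = b.coord j (π x) := rfl
  have hgb : ∀ i j, B (b i : E) (g j) = if i = j then 1 else 0 := by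
    intro i j
    rw [hgx]
    rw [hπ, Submodule.linearProjOfIsCompl_apply_left hG (b i)]
    simp [Module.Basis.coord_apply, Finsupp.single_apply, eq_comm]
  -- the corrected family f
  set lam : Fin n → Fin n → R := fun j k => if j < k then B (g j) (g k) else 0 with hlam
  set f : Fin n → E := fun j => g j - ∑ k, lam j k • (b k : E) with hf
  have hbf : ∀ i j, B (b i : E) (f j) = if i = j then 1 else 0 := by
    intro i j
    simp only [hf, map_sub, map_sum, map_smul, smul_eq_mul, hb0, mul_zero,
      Finset.sum_const_zero, sub_zero, hgb]
  have hgbk : ∀ j k, B (g j) (b k : E) = -(if k = j then 1 else 0) := by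
    intro j k
    rw [skew, hgb]
  have h1 : ∀ (x : E) j, B x (f j) = B x (g j) - ∑ k, lam j k * B x (b k : E) := by
    intro x j
    simp [hf, map_sub, map_sum, map_smul, smul_eq_mul]
  have h2 : ∀ i j, B (g i) (f j) = B (g i) (g j) + lam j i := by
    intro i j
    rw [h1]
    rw [Finset.sum_congr rfl fun k _ => by rw [hgbk i k]]
    simp only [mul_neg, mul_ite, mul_one, mul_zero, Finset.sum_neg_distrib,
      Finset.sum_ite_eq', Finset.mem_univ, if_true]
    ring
  have h3 : ∀ i j, B (f i) (f j) = B (g i) (f j) - lam i j := by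
    intro i j
    have : B (f i) (f j)
        = B (g i) (f j) - ∑ k, lam i k * B (b k : E) (f j) := by
      conv_lhs => rw [show f i = g i - ∑ k, lam i k • (b k : E) from rfl]
      simp [map_sub, map_sum, map_smul, LinearMap.sub_apply, LinearMap.sum_apply,
        LinearMap.smul_apply, smul_eq_mul]
    rw [this, Finset.sum_congr rfl fun k _ => by rw [hbf k j]]
    simp only [mul_ite, mul_one, mul_zero]
    rw [Finset.sum_ite_eq' Finset.univ j (fun k => lam i k)]
    simp
  have hff : ∀ i j, B (f i) (f j) = 0 := by
    intro i j
    rw [h3, h2, hlam]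
    rcases lt_trichotomy i j with h | h | h
    · simp [h, not_lt.mpr h.le]
    · subst h; simp [halt]
    · have h1' : ¬ i < j := not_lt.mpr h.le
      simp only [h1', h, if_true, if_false]
      rw [skew (g j) (g i)]
      ring
  -- E₀ is the span of the b i, inside E
  have hspan : E₀ = Submodule.span R (Set.range fun i => (b i : E)) := by
    conv_lhs => rw [← Submodule.map_subtype_top E₀, ← b.span_eq, Submodule.map_span]
    congr 1
    ext x
    simp [Set.range_comp]
  -- kernel characterization
  have hker : ∀ x : E, (∀ j, B (b j : E) x = 0) → x ∈ E₀ := by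
    intro x hx
    rw [hlag]
    intro e he
    rw [hspan] at he
    induction he using Submodule.span_induction with
    | mem y hy => obtain ⟨i, rfl⟩ := hy; exact hx i
    | zero => simp
    | add y z _ _ hy hz => simp [map_add, hy, hz]
    | smul c y _ hy => simp [map_smul, hy]
  -- the candidate basis vectors
  set v : Fin n ⊕ Fin n → E := Sum.elim (fun i => (b i : E)) f with hv
  have hindep : LinearIndependent R v := by
    rw [Fintype.linearIndependent_iff]
    intro a ha
    have hsum : (∑ i, a (Sum.inl i) • (b i : E)) + (∑ j, a (Sum.inr j) • f j) = 0 := by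
      rw [Fintype.sum_sum_type] at ha
      simpa [hv] using ha
    have hr : ∀ k, a (Sum.inr k) = 0 := by
      intro k
      have := congrArg (B (b k : E)) hsum
      simp only [map_add, map_sum, map_smul, smul_eq_mul, hb0, mul_zero,
        Finset.sum_const_zero, zero_add, hbf, map_zero, mul_ite, mul_one] at this
      simpa using this
    have hsum' : (∑ i, a (Sum.inl i) • (b i : E)) = 0 := by
      rw [← hsum]
      simp [hr]
    have hl : ∀ k, a (Sum.inl k) = 0 := by
      have hz : (∑ i, a (Sum.inl i) • b i) = (0 : E₀) := by
        apply Subtype.ext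
        push_cast
        simpa using hsum'
      exact fun k => Fintype.linearIndependent_iff.mp b.linearIndependent
        (fun i => a (Sum.inl i)) hz k
    rintro (i | j)
    · exact hl i
    · exact hr j
  have hspan' : ⊤ ≤ Submodule.span R (Set.range v) := by
    intro x _
    set y : E := x - ∑ j, B (b j : E) x • f j with hy
    have hyE₀ : y ∈ E₀ := by
      apply hker
      intro k
      simp [hy, map_sub, map_sum, map_smul, smul_eq_mul, hbf, mul_ite, mul_one, mul_zero]
    have hyspan : y ∈ Submodule.span R (Set.range v) := by
      rw [hspan] at hyE₀
      refine Submodule.span_mono ?_ hyE₀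
      rintro z ⟨i, rfl⟩
      exact ⟨Sum.inl i, rfl⟩
    have hfspan : (∑ j, B (b j : E) x • f j) ∈ Submodule.span R (Set.range v) :=
      Submodule.sum_mem _ fun j _ =>
        Submodule.smul_mem _ _ (Submodule.subset_span ⟨Sum.inr j, rfl⟩)
    have : y + (∑ j, B (b j : E) x • f j) = x := by rw [hy]; abel
    rw [← this]
    exact Submodule.add_mem _ hyspan hfspan
  refine ⟨f, Module.Basis.mk hindep hspan', ?_, ?_, hb0, hff, hbf⟩
  · intro i; rw [Module.Basis.mk_apply]; rfl
  · intro i; rw [Module.Basis.mk_apply]; rfl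
end

section
/- Let R be a commutative ring and E a finitely generated projective R-module equipped with a symplectic form ⟨·,·⟩ (an alternating bilinear form such that e ↦ ⟨·,e⟩ is a bijection E → Hom_R(E,R)). Let E₀ and F be Lagrangian direct summands of E with E = E₀ ⊕ F, and let (f₁, …, fₙ) be a basis of F as an R-module. Then there exists a unique n-tuple (e₁, …, eₙ) of elements of E₀ satisfying ⟨eᵢ, fⱼ⟩ = δᵢⱼ for all 1 ≤ i, j ≤ n; moreover this tuple is a basis of E₀ and (e₁, …, eₙ, f₁, …, fₙ) is a symplectic basis of E. -/
/-- if `E₀` and `F` are complementary Lagrangian direct summands of a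
symplectic finitely generated projective module `E`, and `(f₁, …, fₙ)` is a basis of
`F`, then there is a unique tuple `(e₁, …, eₙ)` in `E₀` with `⟨eᵢ, fⱼ⟩ = δᵢⱼ`;
moreover this tuple is a basis of `E₀` and together with `f` forms a symplectic
basis of `E`. -/
theorem statement4 {R E : Type*} [CommRing R]
    [AddCommGroup E] [Module R E] [Module.Finite R E] [Module.Projective R E]
    (B : E →ₗ[R] E →ₗ[R] R)
    (halt : ∀ e : E, B e e = 0)
    (hperf : Function.Bijective ⇑B.flip)
    (E₀ F : Submodule R E)
    (hE₀ : E₀ = Bilin.perp B E₀) (hF : F = Bilin.perp B F)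
    (hcompl : IsCompl E₀ F)
    {n : ℕ} (f : Module.Basis (Fin n) R F) :
    (∃! e : Fin n → E₀,
      ∀ i j, B (e i : E) (f j : E) = if i = j then 1 else 0) ∧
    ∀ e : Fin n → E₀,
      (∀ i j, B (e i : E) (f j : E) = if i = j then 1 else 0) →
      (∃ be : Module.Basis (Fin n) R E₀, ∀ i, be i = e i) ∧
      ∃ c : Module.Basis (Fin n ⊕ Fin n) R E,
        (∀ i, c (Sum.inl i) = (e i : E)) ∧ (∀ i, c (Sum.inr i) = (f i : E)) ∧
        (∀ i j, B (e i : E) (e j : E) = 0) ∧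
        (∀ i j, B (f i : E) (f j : E) = 0) := by
  classical
  have hanti : ∀ x y : E, B x y = - B y x := by
    intro x y
    have h := halt (x + y)
    simp only [map_add, LinearMap.add_apply, halt x, halt y, zero_add, add_zero] at h
    linear_combination h
  have hE₀mem : ∀ (a : E₀) (y : E), y ∈ E₀ → B y (a : E) = 0 := by
    intro a y hy
    have ha : (a : E) ∈ Bilin.perp B E₀ := hE₀ ▸ a.2
    exact ha y hy
  have hFmem : ∀ (a : F) (y : E), y ∈ F → B y (a : E) = 0 := by
    intro a y hy
    have ha : (a : E) ∈ Bilin.perp B F := hF ▸ a.2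
    exact ha y hy
  set φ : E₀ →ₗ[R] Module.Dual R F := B.compl₁₂ E₀.subtype F.subtype with hφdef
  have hφ : ∀ (a : E₀) (x : F), φ a x = B (a : E) (x : E) := fun a x => rfl
  have hinj : Function.Injective φ := by
    rw [injective_iff_map_eq_zero]
    intro a ha
    have h1 : ∀ y : E, B y (a : E) = 0 := by
      intro y
      obtain ⟨y₀, y₁, hy₀, hy₁, rfl⟩ := Submodule.codisjoint_iff_exists_add_eq.mp
        hcompl.codisjoint y
      have h2 : B y₀ (a : E) = 0 := hE₀mem a y₀ hy₀
      have h3 : B y₁ (a : E) = 0 := by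
        have := hanti y₁ (a : E)
        have h4 : B (a : E) y₁ = 0 := by
          have := congrArg (fun g => g ⟨y₁, hy₁⟩) ha
          simpa [hφ] using this
        rw [this, h4, neg_zero]
      simp [map_add, h2, h3]
    have : B.flip (a : E) = 0 := by
      ext y; simpa using h1 y
    have : (a : E) = 0 := hperf.1 (by simpa using this)
    exact Subtype.ext this
  have hsurj : Function.Surjective φ := by
    intro ψ
    set π := F.projectionOnto E₀ hcompl.symm with hπ
    obtain ⟨e, he⟩ := hperf.2 (-(ψ.comp π))
    obtain ⟨e₀, e₁, he₀, he₁, heq⟩ := Submodule.codisjoint_iff_exists_add_eq.mp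
      hcompl.codisjoint e
    refine ⟨⟨e₀, he₀⟩, ?_⟩
    ext x
    have hBe : B (x : E) e = -(ψ (π (x : E))) := by
      have := congrArg (fun g => g (x : E)) he
      simpa using this
    have hπx : π (x : E) = x := Submodule.projectionOnto_apply_left hcompl.symm x
    have h1 : B e₁ (x : E) = 0 := hFmem x e₁ he₁
    have h2 : B e (x : E) = ψ x := by
      rw [hanti, hBe, hπx, neg_neg]
    have h3 : B e₀ (x : E) = ψ x := by
      have : B e₀ (x : E) + B e₁ (x : E) = ψ x := by
        rw [← h2, ← heq]; simp [map_add]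
      simpa [h1] using this
    simpa [hφ] using h3
  let Φ : E₀ ≃ₗ[R] Module.Dual R F := LinearEquiv.ofBijective φ ⟨hinj, hsurj⟩
  have hΦ : ∀ a, Φ a = φ a := fun a => rfl
  set eS : Fin n → E₀ := fun i => Φ.symm (f.dualBasis i) with heS
  have heSprop : ∀ i j, B (eS i : E) (f j : E) = if i = j then 1 else 0 := by
    intro i j
    have : φ (eS i) (f j) = f.dualBasis i (f j) := by
      have := Φ.apply_symm_apply (f.dualBasis i)
      rw [← hΦ]; rw [heS]; simp [this]
    rw [← hφ, this, Module.Basis.dualBasis_apply_self]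
    simp [eq_comm]
  have huniq : ∀ e : Fin n → E₀,
      (∀ i j, B (e i : E) (f j : E) = if i = j then 1 else 0) → e = eS := by
    intro e he
    funext i
    have : φ (e i) = f.dualBasis i := by
      apply f.ext
      intro j
      rw [hφ, he i j, Module.Basis.dualBasis_apply_self]
      simp [eq_comm]
    have h2 : Φ (e i) = f.dualBasis i := by rw [hΦ]; exact this
    have h3 := congrArg Φ.symm h2
    rw [Φ.symm_apply_apply] at h3
    rw [heS]
    exact h3
  refine ⟨⟨eS, heSprop, fun e he => huniq e he⟩, ?_⟩
  intro e he
  have hee : e = eS := huniq e he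
  constructor
  · refine ⟨(f.dualBasis.map Φ.symm), fun i => ?_⟩
    rw [hee]; simp [heS]
  · refine ⟨((f.dualBasis.map Φ.symm).prod f).map
      (Submodule.prodEquivOfIsCompl E₀ F hcompl), ?_, ?_, ?_, ?_⟩
    · intro i
      rw [hee]
      simp [Submodule.coe_prodEquivOfIsCompl', heS]
    · intro i
      simp [Submodule.coe_prodEquivOfIsCompl']
    · intro i j
      have := hanti ((e i : E)) ((e j : E))
      rw [this, hE₀mem (e i) (e j : E) (e j).2, neg_zero]
    · intro i j
      have := hanti ((f i : E)) ((f j : E))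
      rw [this, hFmem (f i) (f j : E) (f j).2, neg_zero]
end
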